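/- For 2 ≤ k ≤ n−1 and any M ∈ ℝ, there exist a constant c > 0 depending only on n and k, and N_0 > 0, such that for all N ≥ N_0 the vector μ with μ_1 = ⋯ = μ_{n-1} = N and μ_n = [M − C(n−1,k)N^k]/[C(n−1,k−1)N^{k−1}] satisfies σ_{k-1}(μ|i) ≥ c N^{k−1} for all i = 1,…,n−1. -/

import Mathlib

open Finset

noncomputable def esym {n : ℕ} (s : Finset (Fin n)) (μ : Fin n → ℝ) (k : ℕ) : ℝ :=
  ∑ t ∈ s.powersetCard k, ∏ j ∈ t, μ j

lemma esym_const {n : ℕ} (s : Finset (Fin n)) (μ : Fin n → ℝ) (x : ℝ) (m : ℕ)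
    (h : ∀ j ∈ s, μ j = x) : esym s μ m = (s.card.choose m : ℝ) * x ^ m := by
  unfold esym
  have : ∀ t ∈ s.powersetCard m, ∏ j ∈ t, μ j = x ^ m := by
    intro t ht
    rw [mem_powersetCard] at ht
    rw [Finset.prod_congr rfl (fun j hj => h j (ht.1 hj)), Finset.prod_const, ht.2]
  rw [Finset.sum_congr rfl this, Finset.sum_const, Finset.card_powersetCard, nsmul_eq_mul]

lemma esym_insert {n : ℕ} (s : Finset (Fin n)) (a : Fin n) (ha : a ∉ s) (μ : Fin n → ℝ) (m : ℕ) :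
    esym (insert a s) μ (m + 1) = esym s μ (m + 1) + μ a * esym s μ m := by
  unfold esym
  rw [Finset.powersetCard_succ_insert ha, Finset.sum_union, Finset.sum_image]
  · rw [Finset.mul_sum]
    congr 1
    refine Finset.sum_congr rfl fun t ht => ?_
    rw [mem_powersetCard] at ht
    rw [Finset.prod_insert (fun h => ha (ht.1 h))]
  · intro t ht u hu htu
    rw [Finset.mem_coe, mem_powersetCard] at ht hu
    have : t = (insert a t).erase a := by
      rw [Finset.erase_insert (fun h => ha (ht.1 h))]
    rw [this, htu, Finset.erase_insert (fun h => ha (hu.1 h))]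
  · rw [Finset.disjoint_left]
    intro t ht ht'
    rw [mem_powersetCard] at ht
    rw [Finset.mem_image] at ht'
    obtain ⟨u, _, rfl⟩ := ht'
    exact ha (ht.1 (Finset.mem_insert_self a u))

set_option maxHeartbeats 1000000 in
theorem stmt11 (n k : ℕ) (hn : 3 ≤ n) (hk : 2 ≤ k) (hkn : k ≤ n - 1) (M : ℝ) :
    ∃ c : ℝ, 0 < c ∧ ∃ N₀ : ℝ, 0 < N₀ ∧
      ∀ N : ℝ, N₀ ≤ N →
        ∀ μ : Fin n → ℝ,
          (μ = fun j : Fin n => if (j : ℕ) < n - 1 then N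
            else (M - ((n - 1).choose k : ℝ) * N ^ k) /
              (((n - 1).choose (k - 1) : ℝ) * N ^ (k - 1))) →
          ∀ i : Fin n, (i : ℕ) < n - 1 →
            c * N ^ (k - 1) ≤ esym (Finset.univ.erase i) μ (k - 1) := by
  obtain ⟨m, rfl⟩ : ∃ m, k = m + 2 := ⟨k - 2, by omega⟩
  obtain ⟨C1, hC1⟩ : ∃ x : ℝ, x = ((n - 2).choose (m + 1) : ℝ) := ⟨_, rfl⟩
  obtain ⟨C2, hC2⟩ : ∃ x : ℝ, x = ((n - 2).choose m : ℝ) := ⟨_, rfl⟩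
  obtain ⟨B, hB⟩ : ∃ x : ℝ, x = ((n - 1).choose (m + 2) : ℝ) := ⟨_, rfl⟩
  obtain ⟨D, hD⟩ : ∃ x : ℝ, x = ((n - 1).choose (m + 1) : ℝ) := ⟨_, rfl⟩
  have hC1pos : 0 < C1 := by
    rw [hC1]
    exact_mod_cast Nat.choose_pos (show m + 1 ≤ n - 2 by omega)
  have hC2pos : 0 < C2 := by
    rw [hC2]
    exact_mod_cast Nat.choose_pos (show m ≤ n - 2 by omega)
  have hDpos : 0 < D := by
    rw [hD]
    exact_mod_cast Nat.choose_pos (show m + 1 ≤ n - 1 by omega)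
  -- key integer identities
  have id1 : (n - 1).choose (m + 2) * (m + 2) = (n - 1).choose (m + 1) * (n - 1 - (m + 1)) :=
    Nat.choose_succ_right_eq (n - 1) (m + 1)
  have id2 : (n - 2).choose (m + 1) * (m + 1) = (n - 2).choose m * (n - 2 - m) :=
    Nat.choose_succ_right_eq (n - 2) m
  have hAint : (n - 2).choose m * (n - 1).choose (m + 2) < (n - 2).choose (m + 1) * (n - 1).choose (m + 1) := by
    have h1 : (n - 2).choose m * ((n - 1).choose (m + 2) * (m + 2)) =
        (n - 1).choose (m + 1) * ((n - 2).choose m * (n - 2 - m)) := by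
      rw [id1]; have : n - 1 - (m + 1) = n - 2 - m := by omega
      rw [this]; ring
    have hc1 : 0 < (n - 2).choose (m + 1) := Nat.choose_pos (by omega)
    have hd : 0 < (n - 1).choose (m + 1) := Nat.choose_pos (by omega)
    nlinarith [h1, id2]
  obtain ⟨A, hA⟩ : ∃ x : ℝ, x = C1 - C2 * B / D := ⟨_, rfl⟩
  have hApos : 0 < A := by
    rw [hA, sub_pos, div_lt_iff₀ hDpos]
    have : C2 * B < C1 * D := by
      rw [hC1, hC2, hB, hD]
      exact_mod_cast hAint
    linarith
  refine ⟨A / 2, by positivity, max 1 (2 * C2 * |M| / (D * A) + 1),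
    lt_of_lt_of_le one_pos (le_max_left _ _), ?_⟩
  intro N hN μ hμ i hi
  have hN1 : (1 : ℝ) ≤ N := le_trans (le_max_left _ _) hN
  have hN0 : (0 : ℝ) < N := lt_of_lt_of_le one_pos hN1
  have hN2 : 2 * C2 * |M| / (D * A) + 1 ≤ N := le_trans (le_max_right _ _) hN
  -- set up the finsets
  have hlast : n - 1 < n := by omega
  set a : Fin n := ⟨n - 1, hlast⟩ with ha
  have hai : a ≠ i := by
    intro h; rw [← h] at hi; simp [ha] at hi
  have haerase : a ∈ Finset.univ.erase i := Finset.mem_erase.2 ⟨hai, Finset.mem_univ a⟩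
  set t : Finset (Fin n) := (Finset.univ.erase i).erase a with ht
  have hins : Finset.univ.erase i = insert a t := by
    rw [ht, Finset.insert_erase haerase]
  have hanott : a ∉ t := Finset.notMem_erase a _
  have hcardt : t.card = n - 2 := by
    rw [ht, Finset.card_erase_of_mem haerase, Finset.card_erase_of_mem (Finset.mem_univ i),
      Finset.card_univ, Fintype.card_fin]
    omega
  have hμt : ∀ j ∈ t, μ j = N := by
    intro j hj
    have hj1 : j ≠ a := Finset.ne_of_mem_erase hj
    have hjlt : (j : ℕ) < n - 1 := by
      have := j.isLt
      rcases Nat.lt_or_ge (j : ℕ) (n - 1) with h | h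
      · exact h
      · exfalso
        have hje : (j : ℕ) = n - 1 := by omega
        exact hj1 (Fin.ext hje)
    rw [hμ]; simp [hjlt]
  have hμa : μ a = (M - B * N ^ (m + 2)) / (D * N ^ (m + 1)) := by
    rw [hμ]; simp only [ha]
    rw [hB, hD]
    norm_num
  have hesym : esym (Finset.univ.erase i) μ (m + 2 - 1) =
      C1 * N ^ (m + 1) + ((M - B * N ^ (m + 2)) / (D * N ^ (m + 1))) * (C2 * N ^ m) := by
    have : m + 2 - 1 = m + 1 := rfl
    rw [this, hins, esym_insert t a hanott μ m, esym_const t μ N (m + 1) hμt,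
      esym_const t μ N m hμt, hcardt, hμa, hC1, hC2]
  rw [hesym]
  have hNne : N ≠ 0 := ne_of_gt hN0
  have hDne : D ≠ 0 := ne_of_gt hDpos
  have key : ((M - B * N ^ (m + 2)) / (D * N ^ (m + 1))) * (C2 * N ^ m) =
      C2 * M / (D * N) - (C2 * B / D) * N ^ (m + 1) := by
    field_simp
    ring
  rw [key]
  have hpow1 : (1 : ℝ) ≤ N ^ (m + 1) := one_le_pow₀ hN1
  have habs : C2 * |M| / (D * N) ≤ A / 2 := by
    rw [div_le_iff₀ (by positivity)]
    have hMnn : (0 : ℝ) ≤ |M| := abs_nonneg M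
    have h2 : 2 * C2 * |M| / (D * A) ≤ N - 1 := by linarith
    rw [div_le_iff₀ (by positivity)] at h2
    nlinarith [mul_pos hDpos hApos, mul_pos hDpos hN0]
  have hMle : -(C2 * |M| / (D * N)) ≤ C2 * M / (D * N) := by
    have h1 : C2 * -|M| ≤ C2 * M := mul_le_mul_of_nonneg_left (neg_abs_le M) hC2pos.le
    have h2 : (0 : ℝ) < D * N := by positivity
    have heq : -(C2 * |M| / (D * N)) = (C2 * -|M|) / (D * N) := by ring
    rw [heq]
    exact (div_le_div_iff_of_pos_right h2).2 h1
  have goal_eq : C1 * N ^ (m + 1) + (C2 * M / (D * N) - C2 * B / D * N ^ (m + 1)) =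
      A * N ^ (m + 1) + C2 * M / (D * N) := by rw [hA]; ring
  rw [goal_eq]
  show A / 2 * N ^ (m + 1) ≤ A * N ^ (m + 1) + C2 * M / (D * N)
  nlinarith [hpow1, habs, hMle, hApos]
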